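/- Let (E,(M^j)_{j∈J}) and (Ẽ,(M̃^j)_{j∈J}) be two generic MPS data of the same dimension D, with correlation functions C and C̃ respectively. Assume there is an integer p ≥ 2 such that for every eigenvalue μ of E there exist an order m ≤ p, a string 𝐣 ∈ J^m and eigenvalues μ_1,…,μ_{m−1} of E with μ ∈ {μ_1,…,μ_{m−1}} such that Tr(M^{j_m} P_{μ_{m−1}} M^{j_{m−1}} P_{μ_{m−2}} ⋯ P_{μ_1} M^{j_1} P_1) ≠ 0. If C^(ℓ)_𝐣(n) = C̃^(ℓ)_𝐣(n) for all orders 2 ≤ ℓ ≤ 2p−1, all strings 𝐣 ∈ J^ℓ and all separations n ∈ ℕ^{ℓ−1}, then C^(N)_𝐣(n) = C̃^(N)_𝐣(n) for all N ≥ 2, all 𝐣 ∈ J^N and all n ∈ ℕ^{N−1}. (A generic translation invariant MPS in the thermodynamic limit with p-number p is completely characterized by its correlation functions of order at most 2p−1.) -/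

import Mathlib

open Matrix

/-- A generic MPS datum of dimension `D` with operator set `J`: a transfer matrix `E` that is
diagonalizable with `D` pairwise distinct eigenvalues (given by a biorthogonal system of right
eigenvectors `v k` and left eigenvectors `w k`), such that `1` is an eigenvalue (placed at
index `0`) and all other eigenvalues have modulus strictly less than `1`, together with a
family of matrices `(M^j)_{j ∈ J}`. -/
structure GenericMPS (D : ℕ) (J : Type*) [NeZero D] where
  E : Matrix (Fin D) (Fin D) ℂ
  M : J → Matrix (Fin D) (Fin D) ℂ
  μ : Fin D → ℂ
  v : Fin D → Fin D → ℂ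
  w : Fin D → Fin D → ℂ
  spec : E = ∑ k : Fin D, μ k • Matrix.vecMulVec (v k) (star (w k))
  ortho : ∀ k l : Fin D, star (w k) ⬝ᵥ v l = if k = l then (1 : ℂ) else 0
  distinct : Function.Injective μ
  top : μ 0 = 1
  contract : ∀ k : Fin D, k ≠ 0 → ‖μ k‖ < 1

namespace GenericMPS

variable {D : ℕ} [NeZero D] {J : Type*}

/-- The rank-one spectral projector `P_{μ_k} = v_k w_k^†` of `E` at the eigenvalue `μ k`;
`P 0` is the projector `P_1` at the top eigenvalue `1`. -/
noncomputable def P (Ψ : GenericMPS D J) (k : Fin D) : Matrix (Fin D) (Fin D) ℂ :=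
  Matrix.vecMulVec (Ψ.v k) (star (Ψ.w k))

/-- The word `M^{j_{r+1}} E^{n_r} M^{j_r} ⋯ M^{j_2} E^{n_1} M^{j_1}` (0-indexed data). -/
noncomputable def word (Ψ : GenericMPS D J) (j : ℕ → J) (n : ℕ → ℕ) :
    ℕ → Matrix (Fin D) (Fin D) ℂ
  | 0 => Ψ.M (j 0)
  | r + 1 => Ψ.M (j (r + 1)) * Ψ.E ^ n r * Ψ.word j n r

/-- The `N`-point correlation function
`C^(N)_𝐣(𝐧) = Tr(M^{j_N} E^{n_{N−1}} M^{j_{N−1}} ⋯ M^{j_2} E^{n_1} M^{j_1} P_1)`. -/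
noncomputable def corr (Ψ : GenericMPS D J) (N : ℕ) (j : ℕ → J) (n : ℕ → ℕ) : ℂ :=
  (Ψ.word j n (N - 1) * Ψ.P 0).trace

/-- The word `M^{j_{r+1}} P_{μ_{k_r}} M^{j_r} ⋯ M^{j_2} P_{μ_{k_1}} M^{j_1}` in which spectral
projectors are inserted between consecutive operators. -/
noncomputable def pword (Ψ : GenericMPS D J) (j : ℕ → J) (kt : ℕ → Fin D) :
    ℕ → Matrix (Fin D) (Fin D) ℂ
  | 0 => Ψ.M (j 0)
  | r + 1 => Ψ.M (j (r + 1)) * Ψ.P (kt r) * Ψ.pword j kt r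

end GenericMPS
section Prelim
open Matrix Finset
variable {D : ℕ} [NeZero D] {J : Type*}

set_option linter.unusedSectionVars false

lemma trace_mul_vecMulVec (X : Matrix (Fin D) (Fin D) ℂ) (a b : Fin D → ℂ) :
    (X * Matrix.vecMulVec a b).trace = b ⬝ᵥ X.mulVec a := by
  simp only [Matrix.trace, Matrix.diag, Matrix.mul_apply, Matrix.vecMulVec_apply, dotProduct,
    Matrix.mulVec, Finset.mul_sum]
  exact Finset.sum_congr rfl fun i _ => Finset.sum_congr rfl fun k _ => by ring

lemma vecMulVec_mulVec' (a b x : Fin D → ℂ) :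
    (Matrix.vecMulVec a b).mulVec x = (b ⬝ᵥ x) • a := by
  funext i
  simp only [Matrix.mulVec, Matrix.vecMulVec_apply, dotProduct, Pi.smul_apply, smul_eq_mul,
    Finset.sum_mul]
  exact Finset.sum_congr rfl fun k _ => by ring

lemma vecMulVec_mul_vecMulVec' (a b c d : Fin D → ℂ) :
    Matrix.vecMulVec a b * Matrix.vecMulVec c d = (b ⬝ᵥ c) • Matrix.vecMulVec a d := by
  ext i k
  simp only [Matrix.mul_apply, Matrix.vecMulVec_apply, Matrix.smul_apply, smul_eq_mul,
    dotProduct, Finset.sum_mul]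
  exact Finset.sum_congr rfl fun l _ => by ring

end Prelim

namespace GenericMPS
open Matrix Finset
variable {D : ℕ} [NeZero D] {J : Type*}

lemma sum_P (Ψ : GenericMPS D J) : ∑ k, Ψ.P k = 1 := by
  set V : Matrix (Fin D) (Fin D) ℂ := Matrix.of fun i k => Ψ.v k i with hV
  set W : Matrix (Fin D) (Fin D) ℂ := Matrix.of fun k i => star (Ψ.w k) i with hW
  have hWV : W * V = 1 := by
    ext k l
    have := Ψ.ortho k l
    simpa [hV, hW, Matrix.mul_apply, Matrix.one_apply, dotProduct] using this
  have hVW : V * W = 1 := mul_eq_one_comm.mp hWV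
  calc ∑ k, Ψ.P k = V * W := by
        ext i i'
        simp [P, Matrix.sum_apply, Matrix.mul_apply, Matrix.vecMulVec_apply, hV, hW]
    _ = 1 := hVW

lemma P_mul_P (Ψ : GenericMPS D J) (k l : Fin D) :
    Ψ.P k * Ψ.P l = if k = l then Ψ.P l else 0 := by
  rw [P, P, vecMulVec_mul_vecMulVec', Ψ.ortho k l]
  split <;> simp_all [P]

lemma E_mul_P (Ψ : GenericMPS D J) (l : Fin D) : Ψ.E * Ψ.P l = Ψ.μ l • Ψ.P l := by
  conv_lhs => rw [Ψ.spec]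
  rw [Finset.sum_mul]
  have : ∀ k : Fin D, (Ψ.μ k • Matrix.vecMulVec (Ψ.v k) (star (Ψ.w k))) * Ψ.P l
      = Ψ.μ k • (if k = l then Ψ.P l else 0) := by
    intro k
    rw [smul_mul_assoc, ← P, P_mul_P]
  simp only [this]
  simp [Finset.sum_ite_eq]

lemma E_pow_mul_P (Ψ : GenericMPS D J) (n : ℕ) (l : Fin D) :
    Ψ.E ^ n * Ψ.P l = Ψ.μ l ^ n • Ψ.P l := by
  induction n with
  | zero => simp
  | succ n ih =>
    rw [pow_succ, Matrix.mul_assoc, E_mul_P, mul_smul_comm, ih, smul_smul, pow_succ]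
    ring_nf

lemma E_pow_eq (Ψ : GenericMPS D J) (n : ℕ) : Ψ.E ^ n = ∑ k, Ψ.μ k ^ n • Ψ.P k := by
  calc Ψ.E ^ n = Ψ.E ^ n * ∑ k, Ψ.P k := by rw [sum_P, Matrix.mul_one]
    _ = ∑ k, Ψ.E ^ n * Ψ.P k := by rw [Finset.mul_sum]
    _ = ∑ k, Ψ.μ k ^ n • Ψ.P k := by simp only [E_pow_mul_P]

lemma pword_congr (Ψ : GenericMPS D J) (j : ℕ → J) (kt kt' : ℕ → Fin D) :
    ∀ r, (∀ i, i < r → kt i = kt' i) → Ψ.pword j kt r = Ψ.pword j kt' r := by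
  intro r
  induction r with
  | zero => intro _; rfl
  | succ r ih =>
    intro h
    rw [pword, pword, h r (by omega), ih fun i hi => h i (by omega)]

end GenericMPS

namespace GenericMPS
open Matrix Finset
variable {D : ℕ} [NeZero D] {J : Type*}

/-- Extend a finite tuple of indices to `ℕ` by `0`. -/
def extF {r : ℕ} [NeZero D] (kt : Fin r → Fin D) (i : ℕ) : Fin D :=
  if h : i < r then kt ⟨i, h⟩ else 0

lemma word_P_expand (Ψ : GenericMPS D J) (j : ℕ → J) (n : ℕ → ℕ) : ∀ r : ℕ,
    Ψ.word j n r * Ψ.P 0 =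
      ∑ kt : Fin r → Fin D,
        (∏ i : Fin r, Ψ.μ (kt i) ^ n i.1) • (Ψ.pword j (extF kt) r * Ψ.P 0) := by
  intro r
  induction r with
  | zero =>
    rw [Fintype.sum_unique]
    simp [word, pword]
  | succ r ih =>
    have step1 : Ψ.word j n (r+1) * Ψ.P 0
        = Ψ.M (j (r+1)) * (Ψ.E ^ n r * (Ψ.word j n r * Ψ.P 0)) := by
      rw [word]; noncomm_ring
    rw [step1, ih, E_pow_eq]
    rw [Finset.sum_mul]
    have step2 : ∀ k : Fin D,
        (Ψ.μ k ^ n r • Ψ.P k) * (∑ kt : Fin r → Fin D,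
            (∏ i : Fin r, Ψ.μ (kt i) ^ n i.1) • (Ψ.pword j (extF kt) r * Ψ.P 0))
        = ∑ kt : Fin r → Fin D,
            ((∏ i : Fin r, Ψ.μ (kt i) ^ n i.1) * Ψ.μ k ^ n r) •
              (Ψ.P k * (Ψ.pword j (extF kt) r * Ψ.P 0)) := by
      intro k
      rw [Finset.mul_sum]
      refine Finset.sum_congr rfl fun kt _ => ?_
      rw [smul_mul_assoc, Matrix.mul_smul, smul_smul]
      ring_nf
    simp only [step2]
    rw [Finset.mul_sum]
    simp only [Finset.mul_sum, Matrix.mul_smul]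
    rw [← Fintype.sum_prod_type']
    refine Fintype.sum_equiv (Fin.snocEquiv (fun _ : Fin (r+1) => Fin D))
      (fun x : Fin D × (Fin r → Fin D) =>
        ((∏ i : Fin r, Ψ.μ (x.2 i) ^ n i.1) * Ψ.μ x.1 ^ n r) •
          (Ψ.M (j (r+1)) * (Ψ.P x.1 * (Ψ.pword j (extF x.2) r * Ψ.P 0))))
      (fun kt : Fin (r+1) → Fin D =>
        (∏ i : Fin (r+1), Ψ.μ (kt i) ^ n i.1) • (Ψ.pword j (extF kt) (r+1) * Ψ.P 0))
      ?_
    rintro ⟨k, kt⟩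
    have hcoef : (∏ i : Fin (r+1), Ψ.μ ((Fin.snoc kt k : Fin (r+1) → Fin D) i) ^ n i.1)
        = (∏ i : Fin r, Ψ.μ (kt i) ^ n i.1) * Ψ.μ k ^ n r := by
      rw [Fin.prod_univ_castSucc]
      simp
    have hword : Ψ.pword j (extF (Fin.snoc kt k : Fin (r+1) → Fin D)) (r+1)
        = Ψ.M (j (r+1)) * Ψ.P k * Ψ.pword j (extF kt) r := by
      rw [pword]
      have h1 : extF (Fin.snoc kt k : Fin (r+1) → Fin D) r = k := by
        have hr : (⟨r, by omega⟩ : Fin (r+1)) = Fin.last r := rfl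
        simp [extF, hr]
      rw [h1]
      congr 1
      apply pword_congr
      intro i hi
      have hi1 : i < r + 1 := by omega
      simp only [extF, dif_pos hi, dif_pos hi1]
      have h2 : (⟨i, hi1⟩ : Fin (r+1)) = Fin.castSucc ⟨i, hi⟩ := rfl
      rw [h2, Fin.snoc_castSucc]
    have he : ((Fin.snocEquiv (fun _ : Fin (r+1) => Fin D)) (k, kt))
        = (Fin.snoc kt k : Fin (r+1) → Fin D) := rfl
    show _ = (∏ i : Fin (r+1),
          Ψ.μ ((Fin.snocEquiv (fun _ : Fin (r+1) => Fin D)) (k, kt) i) ^ n i.1) •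
        (Ψ.pword j (extF ((Fin.snocEquiv (fun _ : Fin (r+1) => Fin D)) (k, kt))) (r+1) * Ψ.P 0)
    rw [he, hcoef, hword]
    rw [Matrix.mul_assoc, Matrix.mul_assoc]

end GenericMPS

namespace GenericMPS
open Matrix Finset
variable {D : ℕ} [NeZero D] {J : Type*}
set_option linter.unusedSectionVars false
set_option linter.unreachableTactic false
set_option linter.unusedTactic false
set_option linter.unnecessarySeqFocus false

/-- Scalar matrix element `w_l† M^x v_k`. -/
noncomputable def aS (Ψ : GenericMPS D J) (l k : Fin D) (x : J) : ℂ :=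
  star (Ψ.w l) ⬝ᵥ (Ψ.M x).mulVec (Ψ.v k)

/-- Vertex sequence of a closed path: `0` at position `0`, `kt (i-1)` at `0 < i < N`, `0` at
positions `≥ N`. -/
def vtx [NeZero D] (kt : ℕ → Fin D) (N i : ℕ) : Fin D :=
  if i = 0 then 0 else if N ≤ i then 0 else kt (i - 1)

/-- Interior vertex sequence (no truncation). -/
def vti [NeZero D] (kt : ℕ → Fin D) (i : ℕ) : Fin D :=
  if i = 0 then 0 else kt (i - 1)

/-- Product of edge weights along a path. -/
def Wgen (F : Fin D → Fin D → J → ℂ) (j : ℕ → J) (vt : ℕ → Fin D) (N : ℕ) : ℂ :=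
  ∏ i ∈ Finset.range N, F (vt (i + 1)) (vt i) (j i)

lemma Wgen_congr (F : Fin D → Fin D → J → ℂ) (j : ℕ → J) {vt vt' : ℕ → Fin D} {N : ℕ}
    (h : ∀ i, i ≤ N → vt i = vt' i) : Wgen F j vt N = Wgen F j vt' N := by
  refine Finset.prod_congr rfl fun i hi => ?_
  have hi' := Finset.mem_range.mp hi
  rw [h i (by omega), h (i+1) (by omega)]

lemma chain (Ψ : GenericMPS D J) (j : ℕ → J) (kt : ℕ → Fin D) : ∀ (r : ℕ) (l : Fin D),
    star (Ψ.w l) ⬝ᵥ (Ψ.pword j kt r).mulVec (Ψ.v 0)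
      = (∏ i ∈ Finset.range r, aS Ψ (vti kt (i+1)) (vti kt i) (j i)) * aS Ψ l (vti kt r) (j r) := by
  intro r
  induction r with
  | zero => intro l; simp [pword, aS, vti]
  | succ r ih =>
    intro l
    have hmv : (Ψ.pword j kt (r+1)).mulVec (Ψ.v 0)
        = (star (Ψ.w (kt r)) ⬝ᵥ (Ψ.pword j kt r).mulVec (Ψ.v 0)) •
            (Ψ.M (j (r+1))).mulVec (Ψ.v (kt r)) := by
      rw [pword, ← Matrix.mulVec_mulVec, ← Matrix.mulVec_mulVec]
      rw [P, vecMulVec_mulVec', Matrix.mulVec_smul]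
    rw [hmv, dotProduct_smul, ih (kt r)]
    rw [Finset.prod_range_succ]
    have h1 : vti kt (r+1) = kt r := by simp [vti]
    rw [h1]
    simp only [smul_eq_mul, aS]

lemma trace_pword (Ψ : GenericMPS D J) (j : ℕ → J) (kt : ℕ → Fin D) (r : ℕ) :
    (Ψ.pword j kt r * Ψ.P 0).trace = Wgen (aS Ψ) j (vtx kt (r+1)) (r+1) := by
  rw [P, trace_mul_vecMulVec, chain, Wgen, Finset.prod_range_succ]
  congr 1
  · refine Finset.prod_congr rfl fun i hi => ?_
    have hi' := Finset.mem_range.mp hi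
    have e1 : vtx kt (r+1) i = vti kt i := by
      simp only [vtx, vti]; split <;> simp_all <;> omega
    have e2 : vtx kt (r+1) (i+1) = vti kt (i+1) := by
      simp only [vtx, vti]; split <;> simp_all <;> omega
    rw [e1, e2]
  · have e3 : vtx kt (r+1) (r+1) = 0 := by simp [vtx]
    have e4 : vtx kt (r+1) r = vti kt r := by
      simp only [vtx, vti]; split <;> simp_all <;> omega
    rw [e3, e4]

end GenericMPS

namespace GenericMPS
open Matrix Finset
variable {D : ℕ} [NeZero D] {J : Type*}
set_option linter.unusedSectionVars false

lemma splice (F : Fin D → Fin D → J → ℂ) (j jρ : ℕ → J) (vt vtρ : ℕ → Fin D)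
    (p q d1 d2 : ℕ) (hk : vtρ q = vt p) :
    Wgen F j vt (p + d2) * Wgen F jρ vtρ (q + d1)
      = Wgen F (fun i => if i < p then j i else jρ (i - p + q))
          (fun i => if i ≤ p then vt i else vtρ (i - p + q)) (p + d1)
        * Wgen F (fun i => if i < q then jρ i else j (i - q + p))
          (fun i => if i ≤ q then vtρ i else vt (i - q + p)) (q + d2) := by
  unfold Wgen
  rw [Finset.prod_range_add, Finset.prod_range_add, Finset.prod_range_add,
    Finset.prod_range_add]
  have e1 : ∀ i ∈ Finset.range p,
      F ((fun i => if i ≤ p then vt i else vtρ (i - p + q)) (i + 1))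
        ((fun i => if i ≤ p then vt i else vtρ (i - p + q)) i)
        ((fun i => if i < p then j i else jρ (i - p + q)) i)
      = F (vt (i + 1)) (vt i) (j i) := by
    intro i hi
    have hi' := Finset.mem_range.mp hi
    simp only [if_pos (by omega : i + 1 ≤ p), if_pos (by omega : i ≤ p), if_pos hi']
  have e2 : ∀ i ∈ Finset.range d1,
      F ((fun i => if i ≤ p then vt i else vtρ (i - p + q)) (p + i + 1))
        ((fun i => if i ≤ p then vt i else vtρ (i - p + q)) (p + i))
        ((fun i => if i < p then j i else jρ (i - p + q)) (p + i))
      = F (vtρ (q + i + 1)) (vtρ (q + i)) (jρ (q + i)) := by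
    intro i _
    simp only [if_neg (by omega : ¬ (p + i + 1 ≤ p)), if_neg (by omega : ¬ (p + i < p))]
    have h1 : p + i + 1 - p + q = q + i + 1 := by omega
    have h2 : p + i - p + q = q + i := by omega
    rw [h1, h2]
    rcases Nat.eq_zero_or_pos i with h | h
    · subst h
      simp only [Nat.add_zero, if_pos (le_refl p), ← hk]
    · rw [if_neg (by omega : ¬ (p + i ≤ p))]
  have e3 : ∀ i ∈ Finset.range q,
      F ((fun i => if i ≤ q then vtρ i else vt (i - q + p)) (i + 1))
        ((fun i => if i ≤ q then vtρ i else vt (i - q + p)) i)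
        ((fun i => if i < q then jρ i else j (i - q + p)) i)
      = F (vtρ (i + 1)) (vtρ i) (jρ i) := by
    intro i hi
    have hi' := Finset.mem_range.mp hi
    simp only [if_pos (by omega : i + 1 ≤ q), if_pos (by omega : i ≤ q), if_pos hi']
  have e4 : ∀ i ∈ Finset.range d2,
      F ((fun i => if i ≤ q then vtρ i else vt (i - q + p)) (q + i + 1))
        ((fun i => if i ≤ q then vtρ i else vt (i - q + p)) (q + i))
        ((fun i => if i < q then jρ i else j (i - q + p)) (q + i))
      = F (vt (p + i + 1)) (vt (p + i)) (j (p + i)) := by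
    intro i _
    simp only [if_neg (by omega : ¬ (q + i + 1 ≤ q)), if_neg (by omega : ¬ (q + i < q))]
    have h1 : q + i + 1 - q + p = p + i + 1 := by omega
    have h2 : q + i - q + p = p + i := by omega
    rw [h1, h2]
    rcases Nat.eq_zero_or_pos i with h | h
    · subst h
      simp only [Nat.add_zero, if_pos (le_refl q), hk]
    · rw [if_neg (by omega : ¬ (q + i ≤ q))]
  rw [Finset.prod_congr rfl e1, Finset.prod_congr rfl e2, Finset.prod_congr rfl e3,
    Finset.prod_congr rfl e4]
  ring

end GenericMPS

section Vandermonde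
open Finset

lemma vand_finset : ∀ (S : Finset ℂ) (c : ℂ → ℂ),
    (∀ n : ℕ, ∑ s ∈ S, c s * s ^ n = 0) → ∀ s ∈ S, c s = 0 := by
  intro S
  induction S using Finset.induction_on with
  | empty => intro c _ s hs; exact absurd hs (Finset.notMem_empty s)
  | insert a s ha ih =>
    intro c hc
    have h2 : ∀ n : ℕ, ∑ x ∈ s, (c x * (x - a)) * x ^ n = 0 := by
      intro n
      have key : ∑ x ∈ insert a s, c x * (x - a) * x ^ n
          = ∑ x ∈ insert a s, (c x * x ^ (n+1) - a * (c x * x ^ n)) := by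
        refine Finset.sum_congr rfl fun x _ => ?_
        rw [pow_succ]; ring
      rw [Finset.sum_insert ha] at key
      have key2 : ∑ x ∈ insert a s, (c x * x ^ (n+1) - a * (c x * x ^ n))
          = (∑ x ∈ insert a s, c x * x ^ (n+1)) - a * ∑ x ∈ insert a s, c x * x ^ n := by
        rw [Finset.sum_sub_distrib, Finset.mul_sum]
      rw [key2, hc (n+1), hc n] at key
      simpa using key
    have h3 := ih _ h2
    have hzero : ∀ x ∈ s, c x = 0 := by
      intro x hx
      have hxa : x ≠ a := fun h => ha (h ▸ hx)
      rcases mul_eq_zero.mp (h3 x hx) with h | h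
      · exact h
      · exact absurd (sub_eq_zero.mp h) hxa
    intro x hx
    rcases Finset.mem_insert.mp hx with h | h
    · subst h
      have h0 := hc 0
      rw [Finset.sum_insert ha] at h0
      simp only [pow_zero, mul_one] at h0
      rw [Finset.sum_congr rfl fun x hx => hzero x hx] at h0
      simpa using h0
    · exact hzero x h

lemma vand_fiber {K : Type*} [Fintype K] (f c : K → ℂ)
    (h : ∀ n : ℕ, ∑ k, c k * f k ^ n = 0) (z : ℂ) :
    ∑ k, (if f k = z then c k else 0) = 0 := by
  by_cases hz : z ∈ Finset.image f Finset.univ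
  · refine vand_finset (Finset.image f Finset.univ)
      (fun z' => ∑ k, if f k = z' then c k else 0) ?_ z hz
    intro n
    have e1 : ∀ z' ∈ Finset.image f Finset.univ,
        (∑ k, if f k = z' then c k else 0) * z' ^ n
          = ∑ k, if f k = z' then c k * f k ^ n else 0 := by
      intro z' _
      rw [Finset.sum_mul]
      refine Finset.sum_congr rfl fun k _ => ?_
      by_cases hfk : f k = z'
      · rw [if_pos hfk, if_pos hfk, hfk]
      · rw [if_neg hfk, if_neg hfk, zero_mul]
    rw [Finset.sum_congr rfl e1, Finset.sum_comm]
    have e2 : ∀ k : K, ∑ z' ∈ Finset.image f Finset.univ,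
        (if f k = z' then c k * f k ^ n else 0) = c k * f k ^ n := by
      intro k
      rw [Finset.sum_ite_eq (Finset.image f Finset.univ) (f k) (fun _ => c k * f k ^ n)]
      rw [if_pos (Finset.mem_image_of_mem f (Finset.mem_univ k))]
    rw [Finset.sum_congr rfl fun k _ => e2 k]
    exact h n
  · refine Finset.sum_eq_zero fun k _ => ?_
    rw [if_neg]
    intro hfk
    exact hz (hfk ▸ Finset.mem_image_of_mem f (Finset.mem_univ k))

lemma vand_multi : ∀ (r : ℕ) {K : Type} [Fintype K] (ν : K → Fin r → ℂ) (c : K → ℂ),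
    (∀ n : Fin r → ℕ, ∑ k, (∏ i, ν k i ^ n i) * c k = 0) →
    ∀ t : Fin r → ℂ, ∑ k, (if ν k = t then c k else 0) = 0 := by
  intro r
  induction r with
  | zero =>
    intro K _ ν c h t
    have e : ∀ k : K, ν k = t := fun k => Subsingleton.elim _ _
    rw [Finset.sum_congr rfl fun k _ => if_pos (e k)]
    simpa using h (fun i => i.elim0)
  | succ r ih =>
    intro K _ ν c h t
    have step : ∀ n' : Fin r → ℕ,
        ∑ k, (∏ i : Fin r, ν k (Fin.castSucc i) ^ n' i) *
          (if ν k (Fin.last r) = t (Fin.last r) then c k else 0) = 0 := by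
      intro n'
      have hnl : ∀ nl : ℕ,
          ∑ k, ((∏ i : Fin r, ν k (Fin.castSucc i) ^ n' i) * c k) * ν k (Fin.last r) ^ nl
            = 0 := by
        intro nl
        calc ∑ k, ((∏ i : Fin r, ν k (Fin.castSucc i) ^ n' i) * c k) * ν k (Fin.last r) ^ nl
            = ∑ k, (∏ i : Fin (r+1), ν k i ^ (Fin.snoc n' nl : Fin (r+1) → ℕ) i) * c k := by
              refine Finset.sum_congr rfl fun k _ => ?_
              rw [Fin.prod_univ_castSucc]
              simp only [Fin.snoc_castSucc, Fin.snoc_last]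
              ring
          _ = 0 := h _
      have hf := vand_fiber (fun k => ν k (Fin.last r))
        (fun k => (∏ i : Fin r, ν k (Fin.castSucc i) ^ n' i) * c k) hnl (t (Fin.last r))
      calc ∑ k, (∏ i : Fin r, ν k (Fin.castSucc i) ^ n' i) *
            (if ν k (Fin.last r) = t (Fin.last r) then c k else 0)
          = ∑ k, (if ν k (Fin.last r) = t (Fin.last r)
              then (∏ i : Fin r, ν k (Fin.castSucc i) ^ n' i) * c k else 0) := by
            refine Finset.sum_congr rfl fun k _ => ?_
            by_cases hc : ν k (Fin.last r) = t (Fin.last r)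
            · rw [if_pos hc, if_pos hc]
            · rw [if_neg hc, if_neg hc, mul_zero]
        _ = 0 := hf
    have key := ih (fun k i => ν k (Fin.castSucc i))
      (fun k => if ν k (Fin.last r) = t (Fin.last r) then c k else 0) step
      (fun i => t (Fin.castSucc i))
    calc ∑ k, (if ν k = t then c k else 0)
        = ∑ k, (if (fun i => ν k (Fin.castSucc i)) = (fun i => t (Fin.castSucc i))
            then (if ν k (Fin.last r) = t (Fin.last r) then c k else 0) else 0) := by
          refine Finset.sum_congr rfl fun k _ => ?_
          by_cases hfull : ν k = t
          · rw [if_pos hfull, if_pos (by rw [hfull]), if_pos (by rw [hfull])]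
          · rw [if_neg hfull]
            by_cases hcast : (fun i => ν k (Fin.castSucc i)) = fun i => t (Fin.castSucc i)
            · by_cases hlast : ν k (Fin.last r) = t (Fin.last r)
              · exact absurd (funext fun i => i.lastCases hlast fun i => congrFun hcast i) hfull
              · rw [if_pos hcast, if_neg hlast]
            · rw [if_neg hcast]
      _ = 0 := key
end Vandermonde

open Matrix Finset GenericMPS in
/-- **A generic translation invariant MPS with `p`-number `p` is completely characterized by its
correlation functions of order at most `2p−1`.**  If for every eigenvalue `μ k` of `E` some trace
`Tr(M^{j_m} P_{μ_{k_{m−1}}} ⋯ P_{μ_{k_1}} M^{j_1} P_1)` of order `m ≤ p`, with `k` occurring among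
the projector indices, is nonzero, then agreement of all correlation functions of orders
`2 ≤ ℓ ≤ 2p−1` implies agreement of all correlation functions of every order `N ≥ 2`. -/
theorem mps_determined_of_low_order_corr {D : ℕ} [NeZero D] {J : Type*}
    (Ψ Ψ' : GenericMPS D J) (p : ℕ) (hp : 2 ≤ p)
    (hgen : ∀ k : Fin D, ∃ m ≤ p, ∃ (j : ℕ → J) (kt : ℕ → Fin D),
      (∃ i, i < m - 1 ∧ kt i = k) ∧ (Ψ.pword j kt (m - 1) * Ψ.P 0).trace ≠ 0)
    (hlow : ∀ ℓ, 2 ≤ ℓ → ℓ ≤ 2 * p - 1 → ∀ (j : ℕ → J) (n : ℕ → ℕ),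
      Ψ.corr ℓ j n = Ψ'.corr ℓ j n) :
    ∀ N, 2 ≤ N → ∀ (j : ℕ → J) (n : ℕ → ℕ), Ψ.corr N j n = Ψ'.corr N j n := by
  classical
  -- Step A: from agreement of low-order correlators, extract per-eigenvalue-tuple data.
  have expandT : ∀ ℓ, 2 ≤ ℓ → ℓ ≤ 2 * p - 1 → ∀ (j : ℕ → J) (kt₀ : Fin (ℓ-1) → Fin D),
      (Ψ.pword j (extF kt₀) (ℓ-1) * Ψ.P 0).trace
        = ∑ kt' : Fin (ℓ-1) → Fin D,
            (if (fun i => Ψ'.μ (kt' i)) = (fun i => Ψ.μ (kt₀ i))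
              then (Ψ'.pword j (extF kt') (ℓ-1) * Ψ'.P 0).trace else 0) := by
    intro ℓ h2 hle j kt₀
    have hsum : ∀ nF : Fin (ℓ-1) → ℕ,
        ∑ kt : Fin (ℓ-1) → Fin D,
            (∏ i, Ψ.μ (kt i) ^ nF i) * (Ψ.pword j (extF kt) (ℓ-1) * Ψ.P 0).trace
          = ∑ kt : Fin (ℓ-1) → Fin D,
              (∏ i, Ψ'.μ (kt i) ^ nF i) * (Ψ'.pword j (extF kt) (ℓ-1) * Ψ'.P 0).trace := by
      intro nF
      have hc := hlow ℓ h2 hle j (fun i => if h : i < ℓ-1 then nF ⟨i, h⟩ else 0)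
      unfold GenericMPS.corr at hc
      rw [word_P_expand, word_P_expand] at hc
      rw [Matrix.trace_sum, Matrix.trace_sum] at hc
      simp only [Matrix.trace_smul, smul_eq_mul] at hc
      have hexp : ∀ (g : Fin D → ℂ) (kt : Fin (ℓ-1) → Fin D),
          (∏ i : Fin (ℓ-1), g (kt i) ^ (if h : (i : ℕ) < ℓ-1 then nF ⟨(i : ℕ), h⟩ else 0))
            = ∏ i : Fin (ℓ-1), g (kt i) ^ nF i := by
        intro g kt
        refine Finset.prod_congr rfl fun i _ => ?_
        rw [dif_pos i.isLt]
      calc ∑ kt : Fin (ℓ-1) → Fin D,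
            (∏ i, Ψ.μ (kt i) ^ nF i) * (Ψ.pword j (extF kt) (ℓ-1) * Ψ.P 0).trace
          = ∑ kt : Fin (ℓ-1) → Fin D,
              (∏ i : Fin (ℓ-1), Ψ.μ (kt i) ^ (if h : (i : ℕ) < ℓ-1 then nF ⟨(i : ℕ), h⟩ else 0)) *
                (Ψ.pword j (extF kt) (ℓ-1) * Ψ.P 0).trace :=
            (Finset.sum_congr rfl fun kt _ => by rw [hexp (fun k => Ψ.μ k) kt]).symm
        _ = ∑ kt : Fin (ℓ-1) → Fin D,
              (∏ i : Fin (ℓ-1), Ψ'.μ (kt i) ^ (if h : (i : ℕ) < ℓ-1 then nF ⟨(i : ℕ), h⟩ else 0)) *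
                (Ψ'.pword j (extF kt) (ℓ-1) * Ψ'.P 0).trace := hc
        _ = ∑ kt : Fin (ℓ-1) → Fin D,
              (∏ i, Ψ'.μ (kt i) ^ nF i) * (Ψ'.pword j (extF kt) (ℓ-1) * Ψ'.P 0).trace :=
            Finset.sum_congr rfl fun kt _ => by rw [hexp (fun k => Ψ'.μ k) kt]
    have hv := vand_multi (ℓ-1)
      (Sum.elim (fun kt : Fin (ℓ-1) → Fin D => fun i => Ψ.μ (kt i))
                (fun kt : Fin (ℓ-1) → Fin D => fun i => Ψ'.μ (kt i)))
      (Sum.elim (fun kt => (Ψ.pword j (extF kt) (ℓ-1) * Ψ.P 0).trace)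
                (fun kt => -(Ψ'.pword j (extF kt) (ℓ-1) * Ψ'.P 0).trace))
      ?_ (fun i => Ψ.μ (kt₀ i))
    · rw [Fintype.sum_sum_type] at hv
      simp only [Sum.elim_inl, Sum.elim_inr] at hv
      have hfirst : ∑ kt : Fin (ℓ-1) → Fin D,
          (if (fun i => Ψ.μ (kt i)) = (fun i => Ψ.μ (kt₀ i))
            then (Ψ.pword j (extF kt) (ℓ-1) * Ψ.P 0).trace else 0)
          = (Ψ.pword j (extF kt₀) (ℓ-1) * Ψ.P 0).trace := by
        have hiff : ∀ kt : Fin (ℓ-1) → Fin D,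
            ((fun i => Ψ.μ (kt i)) = (fun i => Ψ.μ (kt₀ i))) ↔ kt = kt₀ := by
          intro kt
          constructor
          · intro he; funext i; exact Ψ.distinct (congrFun he i)
          · rintro rfl; rfl
        rw [Finset.sum_congr rfl fun kt _ =>
          if_congr (hiff kt) rfl rfl]
        rw [Finset.sum_ite_eq' Finset.univ kt₀
          (fun kt => (Ψ.pword j (extF kt) (ℓ-1) * Ψ.P 0).trace)]
        rw [if_pos (Finset.mem_univ kt₀)]
      have hsecond : ∑ kt' : Fin (ℓ-1) → Fin D,
          (if (fun i => Ψ'.μ (kt' i)) = (fun i => Ψ.μ (kt₀ i))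
            then -(Ψ'.pword j (extF kt') (ℓ-1) * Ψ'.P 0).trace else 0)
          = -∑ kt' : Fin (ℓ-1) → Fin D,
              (if (fun i => Ψ'.μ (kt' i)) = (fun i => Ψ.μ (kt₀ i))
                then (Ψ'.pword j (extF kt') (ℓ-1) * Ψ'.P 0).trace else 0) := by
        rw [← Finset.sum_neg_distrib]
        refine Finset.sum_congr rfl fun kt' _ => ?_
        split <;> simp
      have hv' : (∑ kt : Fin (ℓ-1) → Fin D,
            (if (fun i => Ψ.μ (kt i)) = (fun i => Ψ.μ (kt₀ i))
              then (Ψ.pword j (extF kt) (ℓ-1) * Ψ.P 0).trace else 0))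
          + ∑ kt' : Fin (ℓ-1) → Fin D,
            (if (fun i => Ψ'.μ (kt' i)) = (fun i => Ψ.μ (kt₀ i))
              then -(Ψ'.pword j (extF kt') (ℓ-1) * Ψ'.P 0).trace else 0) = 0 := hv
      rw [hfirst, hsecond] at hv'
      linear_combination hv'
    · intro nF
      rw [Fintype.sum_sum_type]
      simp only [Sum.elim_inl, Sum.elim_inr, mul_neg]
      rw [Finset.sum_neg_distrib, hsum nF]
      ring
  -- Step B: eigenvalue matching
  have hexist : ∀ k : Fin D, ∃ k', Ψ'.μ k' = Ψ.μ k := by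
    intro k
    obtain ⟨m, hmp, j, kt, ⟨i₀, hi₀, hki⟩, hT⟩ := hgen k
    have hm2 : 2 ≤ m := by omega
    have hmle : m ≤ 2 * p - 1 := by omega
    have hcong : Ψ.pword j (extF (fun i : Fin (m-1) => kt i.1)) (m-1) = Ψ.pword j kt (m-1) :=
      Ψ.pword_congr j _ kt (m-1) (fun i hi => by simp [extF, hi])
    have hTT : (Ψ.pword j (extF (fun i : Fin (m-1) => kt i.1)) (m-1) * Ψ.P 0).trace ≠ 0 := by
      rw [hcong]; exact hT
    rw [expandT m hm2 hmle j (fun i : Fin (m-1) => kt i.1)] at hTT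
    obtain ⟨kt', _, hne⟩ := Finset.exists_ne_zero_of_sum_ne_zero hTT
    by_cases hcond : (fun i => Ψ'.μ (kt' i)) = fun i : Fin (m-1) => Ψ.μ (kt i.1)
    · refine ⟨kt' ⟨i₀, by omega⟩, ?_⟩
      have := congrFun hcond ⟨i₀, by omega⟩
      simpa [hki] using this
    · rw [if_neg hcond] at hne; exact absurd rfl hne
  choose σ hσ using hexist
  have hσinj : Function.Injective σ := fun a b hab =>
    Ψ.distinct (by rw [← hσ a, ← hσ b, hab])
  have hσ0 : σ 0 = 0 := by
    by_contra h0
    have hc := Ψ'.contract (σ 0) h0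
    rw [hσ 0, Ψ.top] at hc
    simp at hc
  -- Step C: low-order trace equality
  have lowT : ∀ ℓ, 2 ≤ ℓ → ℓ ≤ 2 * p - 1 → ∀ (j : ℕ → J) (kt₀ : Fin (ℓ-1) → Fin D),
      (Ψ.pword j (extF kt₀) (ℓ-1) * Ψ.P 0).trace
        = (Ψ'.pword j (extF (fun i => σ (kt₀ i))) (ℓ-1) * Ψ'.P 0).trace := by
    intro ℓ h2 hle j kt₀
    rw [expandT ℓ h2 hle j kt₀]
    have hiff : ∀ kt' : Fin (ℓ-1) → Fin D,
        ((fun i => Ψ'.μ (kt' i)) = (fun i => Ψ.μ (kt₀ i))) ↔ kt' = fun i => σ (kt₀ i) := by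
      intro kt'
      constructor
      · intro he; funext i
        exact Ψ'.distinct (by rw [congrFun he i, ← hσ (kt₀ i)])
      · rintro rfl; funext i; exact hσ (kt₀ i)
    rw [Finset.sum_congr rfl fun kt' _ => if_congr (hiff kt') rfl rfl]
    rw [Finset.sum_ite_eq' Finset.univ (fun i => σ (kt₀ i))
      (fun kt' => (Ψ'.pword j (extF kt') (ℓ-1) * Ψ'.P 0).trace)]
    rw [if_pos (Finset.mem_univ _)]
  -- Step C': low-order equality in path-product form
  have lowW : ∀ ℓ, 2 ≤ ℓ → ℓ ≤ 2 * p - 1 → ∀ (j : ℕ → J) (vt : ℕ → Fin D),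
      vt 0 = 0 → vt ℓ = 0 →
      Wgen (aS Ψ) j vt ℓ = Wgen (fun l k x => aS Ψ' (σ l) (σ k) x) j vt ℓ := by
    intro ℓ h2 hle j vt h0 hN
    obtain ⟨s, rfl⟩ : ∃ s, ℓ = s + 2 := ⟨ℓ - 2, by omega⟩
    have e1 : Wgen (aS Ψ) j vt (s+2)
        = (Ψ.pword j (extF (fun i : Fin (s+1) => vt (i.1 + 1))) (s+1) * Ψ.P 0).trace := by
      rw [trace_pword]
      refine Wgen_congr _ _ fun i hi => ?_
      by_cases hi0 : i = 0
      · subst hi0; simp [vtx, h0]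
      · by_cases hiN : i = s + 2
        · subst hiN; simp [vtx, hN]
        · have hlt : i - 1 < s + 1 := by omega
          simp only [vtx, if_neg hi0, if_neg (by omega : ¬ s + 2 ≤ i), extF, dif_pos hlt]
          show vt i = vt (i - 1 + 1)
          congr 1
          omega
    have e2 : Wgen (fun l k x => aS Ψ' (σ l) (σ k) x) j vt (s+2)
        = (Ψ'.pword j (extF (fun i : Fin (s+1) => σ (vt (i.1 + 1)))) (s+1) * Ψ'.P 0).trace := by
      rw [trace_pword]
      have hrfl : Wgen (fun l k x => aS Ψ' (σ l) (σ k) x) j vt (s+2)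
          = Wgen (aS Ψ') j (fun i => σ (vt i)) (s+2) := rfl
      rw [hrfl]
      refine Wgen_congr _ _ fun i hi => ?_
      by_cases hi0 : i = 0
      · subst hi0; simp [vtx, h0, hσ0]
      · by_cases hiN : i = s + 2
        · subst hiN; simp [vtx, hN, hσ0]
        · have hlt : i - 1 < s + 1 := by omega
          simp only [vtx, if_neg hi0, if_neg (by omega : ¬ s + 2 ≤ i), extF, dif_pos hlt]
          show σ (vt i) = σ (vt (i - 1 + 1))
          congr 2
          omega
    rw [e1, e2]
    exact lowT (s+2) h2 hle j (fun i : Fin (s+1) => vt (i.1 + 1))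
  -- Step D: the key induction extending the equality to all orders
  have key : ∀ N, 2 ≤ N → ∀ (j : ℕ → J) (vt : ℕ → Fin D), vt 0 = 0 → vt N = 0 →
      Wgen (aS Ψ) j vt N = Wgen (fun l k x => aS Ψ' (σ l) (σ k) x) j vt N := by
    intro N
    induction N using Nat.strong_induction_on with
    | _ N ih =>
    intro hN2 j vt h0 hN
    by_cases hsmall : N ≤ 2 * p - 1
    · exact lowW N hN2 hsmall j vt h0 hN
    · have hNbig : 2 * p ≤ N := by omega
      obtain ⟨m, hmp, jρ, ktρ, ⟨i₀, hi₀, hki⟩, hT⟩ := hgen (vt p)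
      have hm2 : 2 ≤ m := by omega
      have hρ0 : vtx ktρ m 0 = 0 := by simp [vtx]
      have hρm : vtx ktρ m m = 0 := by
        simp only [vtx]
        split
        · rfl
        · rw [if_pos (le_refl m)]
      have hρq : vtx ktρ m (i₀ + 1) = vt p := by
        simp only [vtx, if_neg (by omega : ¬ i₀ + 1 = 0), if_neg (by omega : ¬ m ≤ i₀ + 1)]
        rw [show i₀ + 1 - 1 = i₀ from by omega, hki]
      have hWρ : (Ψ.pword jρ ktρ (m-1) * Ψ.P 0).trace = Wgen (aS Ψ) jρ (vtx ktρ m) m := by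
        rw [trace_pword, show m - 1 + 1 = m from by omega]
      have hWρa : Wgen (aS Ψ) jρ (vtx ktρ m) m ≠ 0 := by rw [← hWρ]; exact hT
      have hWρb : Wgen (aS Ψ) jρ (vtx ktρ m) m
          = Wgen (fun l k x => aS Ψ' (σ l) (σ k) x) jρ (vtx ktρ m) m :=
        lowW m hm2 (by omega) jρ (vtx ktρ m) hρ0 hρm
      have hsplA := splice (aS Ψ) j jρ vt (vtx ktρ m) p (i₀ + 1) (m - (i₀ + 1)) (N - p) hρq
      have hsplB := splice (fun l k x => aS Ψ' (σ l) (σ k) x) j jρ vt (vtx ktρ m)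
        p (i₀ + 1) (m - (i₀ + 1)) (N - p) hρq
      have h10 : (fun i => if i ≤ p then vt i else vtx ktρ m (i - p + (i₀ + 1))) 0 = 0 := by
        simp only [if_pos (Nat.zero_le p)]
        exact h0
      have h1e : (fun i => if i ≤ p then vt i else vtx ktρ m (i - p + (i₀ + 1)))
          (p + (m - (i₀ + 1))) = 0 := by
        simp only [if_neg (by omega : ¬ p + (m - (i₀ + 1)) ≤ p)]
        rw [show p + (m - (i₀ + 1)) - p + (i₀ + 1) = m from by omega]
        exact hρm
      have h20 : (fun i => if i ≤ i₀ + 1 then vtx ktρ m i else vt (i - (i₀ + 1) + p)) 0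
          = 0 := by
        simp only [if_pos (Nat.zero_le (i₀ + 1))]
        exact hρ0
      have h2e : (fun i => if i ≤ i₀ + 1 then vtx ktρ m i else vt (i - (i₀ + 1) + p))
          ((i₀ + 1) + (N - p)) = 0 := by
        simp only [if_neg (by omega : ¬ (i₀ + 1) + (N - p) ≤ i₀ + 1)]
        rw [show (i₀ + 1) + (N - p) - (i₀ + 1) + p = N from by omega]
        exact hN
      have e1 := ih (p + (m - (i₀ + 1))) (by omega) (by omega)
        (fun i => if i < p then j i else jρ (i - p + (i₀ + 1)))
        (fun i => if i ≤ p then vt i else vtx ktρ m (i - p + (i₀ + 1))) h10 h1e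
      have e2 := ih ((i₀ + 1) + (N - p)) (by omega) (by omega)
        (fun i => if i < i₀ + 1 then jρ i else j (i - (i₀ + 1) + p))
        (fun i => if i ≤ i₀ + 1 then vtx ktρ m i else vt (i - (i₀ + 1) + p)) h20 h2e
      have hcomb : Wgen (aS Ψ) j vt (p + (N - p)) * Wgen (aS Ψ) jρ (vtx ktρ m) ((i₀ + 1) + (m - (i₀ + 1)))
          = Wgen (fun l k x => aS Ψ' (σ l) (σ k) x) j vt (p + (N - p))
            * Wgen (fun l k x => aS Ψ' (σ l) (σ k) x) jρ (vtx ktρ m) ((i₀ + 1) + (m - (i₀ + 1))) := by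
        rw [hsplA, hsplB, e1, e2]
      rw [show (i₀ + 1) + (m - (i₀ + 1)) = m from by omega,
        show p + (N - p) = N from by omega, ← hWρb] at hcomb
      exact mul_right_cancel₀ hWρa hcomb
  -- Final step
  intro N hN2 j n
  unfold GenericMPS.corr
  rw [word_P_expand, word_P_expand]
  rw [Matrix.trace_sum, Matrix.trace_sum]
  simp only [Matrix.trace_smul, smul_eq_mul]
  refine Fintype.sum_equiv
    (Equiv.arrowCongr (Equiv.refl (Fin (N-1)))
      (Equiv.ofBijective σ (Finite.injective_iff_bijective.mp hσinj))) _ _ ?_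
  intro kt
  show (∏ i : Fin (N-1), Ψ.μ (kt i) ^ n i.1) * (Ψ.pword j (extF kt) (N-1) * Ψ.P 0).trace
      = (∏ i : Fin (N-1), Ψ'.μ (σ (kt i)) ^ n i.1) *
          (Ψ'.pword j (extF (fun i => σ (kt i))) (N-1) * Ψ'.P 0).trace
  have hprod : (∏ i : Fin (N-1), Ψ'.μ (σ (kt i)) ^ n i.1)
      = ∏ i : Fin (N-1), Ψ.μ (kt i) ^ n i.1 :=
    Finset.prod_congr rfl fun i _ => by rw [hσ]
  rw [hprod]
  congr 1
  -- trace equality via key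
  have hT1 : (Ψ.pword j (extF kt) (N-1) * Ψ.P 0).trace
      = Wgen (aS Ψ) j (vtx (extF kt) (N-1+1)) (N-1+1) := trace_pword Ψ j (extF kt) (N-1)
  have hT2 : (Ψ'.pword j (extF (fun i => σ (kt i))) (N-1) * Ψ'.P 0).trace
      = Wgen (aS Ψ') j (vtx (extF (fun i => σ (kt i))) (N-1+1)) (N-1+1) :=
    trace_pword Ψ' j (extF (fun i => σ (kt i))) (N-1)
  rw [hT1, hT2]
  have hkey := key (N-1+1) (by omega) j (vtx (extF kt) (N-1+1)) (by simp [vtx])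
    (by simp [vtx])
  rw [hkey]
  have hrfl : Wgen (fun l k x => aS Ψ' (σ l) (σ k) x) j (vtx (extF kt) (N-1+1)) (N-1+1)
      = Wgen (aS Ψ') j (fun i => σ (vtx (extF kt) (N-1+1) i)) (N-1+1) := rfl
  rw [hrfl]
  refine Wgen_congr _ _ fun i hi => ?_
  by_cases hi0 : i = 0
  · subst hi0; simp [vtx, hσ0]
  · by_cases hiN : i = N-1+1
    · subst hiN
      simp only [vtx]
      rw [if_neg hi0, if_neg hi0, if_pos (le_refl (N-1+1)), if_pos (le_refl (N-1+1)), hσ0]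
    · have hlt : i - 1 < N - 1 := by omega
      simp only [vtx, if_neg hi0, if_neg (by omega : ¬ N-1+1 ≤ i), extF, dif_pos hlt]
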